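/- For the fat hook λ = ((a_1+a_2)^{a_1}, a_1^{a_2}), the number of λ-plane trees on k+1 vertices (k ≥ 1) equals Σ_{j=0}^{k+1} (1/k) · binom(2k, k+1-j) · binom(k, j) · a_1^{k+1-j} · a_2^j. -/

import Mathlib

def cellMem (L : ℕ → ℕ) (i j : ℕ) : Prop := 1 ≤ i ∧ 1 ≤ j ∧ j ≤ L i

def IsPartitionOfLength (L : ℕ → ℕ) (l : ℕ) : Prop :=
  (∀ i j, 1 ≤ i → i ≤ j → L j ≤ L i) ∧ ∀ i, 1 ≤ i → (1 ≤ L i ↔ i ≤ l)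

def SelfConjugate (L : ℕ → ℕ) : Prop := ∀ i j, cellMem L i j ↔ cellMem L j i

inductive LTree where
  | node : ℕ → List LTree → LTree

namespace LTree

def label : LTree → ℕ
  | node a _ => a

def size : LTree → ℕ
  | node _ ts => 1 + (ts.attach.map (fun t => size t.1)).sum
decreasing_by
  have := List.sizeOf_lt_of_mem t.2
  simp only [node.sizeOf_spec]
  omega

def countLabel (i : ℕ) : LTree → ℕ
  | node a ts => (if a = i then 1 else 0) + (ts.attach.map (fun t => countLabel i t.1)).sum
decreasing_by
  have := List.sizeOf_lt_of_mem t.2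
  simp only [node.sizeOf_spec]
  omega

def Valid (P : ℕ → ℕ → Prop) : LTree → Prop
  | node a ts => ∀ t ∈ ts, P a t.label ∧ Valid P t
decreasing_by
  have := List.sizeOf_lt_of_mem ‹_ ∈ _›
  simp only [node.sizeOf_spec]
  omega

def LabelsLe (l : ℕ) : LTree → Prop
  | node a ts => (1 ≤ a ∧ a ≤ l) ∧ ∀ t ∈ ts, LabelsLe l t
decreasing_by
  have := List.sizeOf_lt_of_mem ‹_ ∈ _›
  simp only [node.sizeOf_spec]
  omega

end LTree

/-- A `λ`-plane tree: labels in `[1, l]` and every edge `{u, v}` satisfies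
`(c u, c v) ∈ λ`. -/
def IsLambdaPlaneTree (L : ℕ → ℕ) (l : ℕ) (t : LTree) : Prop :=
  LTree.LabelsLe l t ∧ LTree.Valid (fun u v => cellMem L u v) t

/-- An `r`-plane tree: labels in `[1, r]` and every edge `{u, v}` satisfies
`c u + c v ≤ r + 1`. -/
def IsRPlaneTree (r : ℕ) (t : LTree) : Prop :=
  LTree.LabelsLe r t ∧ LTree.Valid (fun u v => u + v ≤ r + 1) t

/-- `C_k^λ`: the number of `λ`-plane trees on `k + 1` vertices. -/
noncomputable def lambdaPlaneCount (L : ℕ → ℕ) (l k : ℕ) : ℕ :=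
  Nat.card {t : LTree // t.size = k + 1 ∧ IsLambdaPlaneTree L l t}

/-- The number of `r`-plane trees on `k + 1` vertices. -/
noncomputable def rPlaneCount (r k : ℕ) : ℕ :=
  Nat.card {t : LTree // t.size = k + 1 ∧ IsRPlaneTree r t}


namespace LTree

theorem size_node (a : ℕ) (ts : List LTree) :
    (node a ts).size = 1 + (ts.map size).sum := by
  rw [size]; congr 1; simp [List.attach_map_val]

theorem labelsLe_node (l a : ℕ) (ts : List LTree) :
    LabelsLe l (node a ts) ↔ (1 ≤ a ∧ a ≤ l) ∧ ∀ t ∈ ts, LabelsLe l t := by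
  rw [LabelsLe]

theorem one_le_size (t : LTree) : 1 ≤ t.size := by
  cases t with
  | node a ts => rw [size_node]; omega

end LTree

def lsize (ts : List LTree) : ℕ := (ts.map LTree.size).sum

@[simp] theorem lsize_nil : lsize [] = 0 := rfl
@[simp] theorem lsize_cons (t : LTree) (ts : List LTree) :
    lsize (t :: ts) = t.size + lsize ts := by simp [lsize]

section CardMachinery

variable {α β : Type*}

def pairSigmaEquiv (f : α → ℕ) (g : β → ℕ) (P : α → Prop) (Q : β → Prop) (n : ℕ) :
    {x : α × β // f x.1 + g x.2 = n ∧ P x.1 ∧ Q x.2} ≃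
      Σ i : Fin (n + 1), {a // f a = i.1 ∧ P a} × {b // g b = n - i.1 ∧ Q b} where
  toFun x := ⟨⟨f x.1.1, by omega⟩,
    ⟨⟨x.1.1, rfl, x.2.2.1⟩, ⟨x.1.2, by
      show g x.1.2 = n - f x.1.1
      have h := x.2.1; omega, x.2.2.2⟩⟩⟩
  invFun y := ⟨(y.2.1.1, y.2.2.1), by
    obtain ⟨⟨i, hi⟩, ⟨⟨a, ha, pa⟩, ⟨b, hb, qb⟩⟩⟩ := y
    refine ⟨?_, pa, qb⟩
    simp at ha hb ⊢
    omega⟩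
  left_inv x := rfl
  right_inv := by
    rintro ⟨⟨i, hi⟩, ⟨⟨a, ha, pa⟩, ⟨b, hb, qb⟩⟩⟩
    dsimp at ha ⊢
    subst ha
    rfl

theorem nat_card_pair (f : α → ℕ) (g : β → ℕ) (P : α → Prop) (Q : β → Prop) (n : ℕ)
    (hP : ∀ i, Finite {a // f a = i ∧ P a}) (hQ : ∀ i, Finite {b // g b = i ∧ Q b}) :
    Nat.card {x : α × β // f x.1 + g x.2 = n ∧ P x.1 ∧ Q x.2} =
      ∑ i ∈ Finset.range (n + 1),
        Nat.card {a // f a = i ∧ P a} * Nat.card {b // g b = n - i ∧ Q b} := by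
  classical
  rw [Nat.card_congr (pairSigmaEquiv f g P Q n)]
  haveI iP : ∀ i : ℕ, Fintype {a // f a = i ∧ P a} := fun i => @Fintype.ofFinite _ (hP i)
  haveI iQ : ∀ i : ℕ, Fintype {b // g b = i ∧ Q b} := fun i => @Fintype.ofFinite _ (hQ i)
  rw [Nat.card_eq_fintype_card, Fintype.card_sigma, ← Fin.sum_univ_eq_sum_range]
  congr 1
  ext i
  rw [Fintype.card_prod, Nat.card_eq_fintype_card, Nat.card_eq_fintype_card]

end CardMachinery

def nodeEquiv (C : ℕ → Prop) (R : LTree → Prop) (W : LTree → Prop)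
    (hW : ∀ a ts, W (LTree.node a ts) ↔ C a ∧ ∀ t ∈ ts, R t) (n : ℕ) :
    {t : LTree // t.size = n + 1 ∧ W t} ≃
      {a : ℕ // C a} × {ts : List LTree // lsize ts = n ∧ ∀ t ∈ ts, R t} where
  toFun x := match x with
    | ⟨LTree.node a ts, h⟩ =>
        (⟨a, ((hW a ts).1 h.2).1⟩, ⟨ts, by
          have h1 := h.1
          rw [LTree.size_node] at h1
          exact ⟨by simp only [lsize]; omega, ((hW a ts).1 h.2).2⟩⟩)
  invFun y := ⟨LTree.node y.1.1 y.2.1, by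
    rw [LTree.size_node]
    refine ⟨?_, (hW _ _).2 ⟨y.1.2, y.2.2.2⟩⟩
    have h1 := y.2.2.1
    simp only [lsize] at h1
    omega⟩
  left_inv := by rintro ⟨⟨a, ts⟩, h⟩; rfl
  right_inv := by rintro ⟨⟨a, ha⟩, ⟨ts, hts⟩⟩; rfl

def consEquiv (R : LTree → Prop) (n : ℕ) :
    {ts : List LTree // lsize ts = n + 1 ∧ ∀ t ∈ ts, R t} ≃
      {x : LTree × List LTree //
        x.1.size + lsize x.2 = n + 1 ∧ R x.1 ∧ ∀ t ∈ x.2, R t} where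
  toFun x := match x with
    | ⟨[], h⟩ => False.elim (by simpa using h.1)
    | ⟨t :: ts, h⟩ => ⟨(t, ts), by
        obtain ⟨h1, h2⟩ := h
        simp only [lsize_cons] at h1
        exact ⟨h1, h2 t (by simp), fun t' ht' => h2 t' (by simp [ht'])⟩⟩
  invFun y := ⟨y.1.1 :: y.1.2, by
    obtain ⟨h1, h2, h3⟩ := y.2
    refine ⟨by simpa using h1, ?_⟩
    intro t ht
    rcases List.mem_cons.1 ht with h | h
    · subst h; exact h2
    · exact h3 t h⟩
  left_inv := by
    rintro ⟨(_ | ⟨t, ts⟩), h⟩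
    · exact False.elim (by simpa using h.1)
    · rfl
  right_inv := by rintro ⟨⟨t, ts⟩, h⟩; rfl

def intervalEquiv (lo m : ℕ) : {a : ℕ // lo + 1 ≤ a ∧ a ≤ lo + m} ≃ Fin m where
  toFun x := ⟨x.1 - (lo + 1), by omega⟩
  invFun i := ⟨lo + 1 + i.1, by omega⟩
  left_inv := by rintro ⟨a, h⟩; exact Subtype.ext (by simp; omega)
  right_inv := by rintro ⟨i, h⟩; exact Fin.ext (by simp)

theorem card_interval (lo m : ℕ) : Nat.card {a : ℕ // lo + 1 ≤ a ∧ a ≤ lo + m} = m := by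
  rw [Nat.card_congr (intervalEquiv lo m)]
  simp

theorem finite_label (l : ℕ) : Finite {a : ℕ // 1 ≤ a ∧ a ≤ l} :=
  Finite.of_equiv _ (((intervalEquiv 0 l).symm).trans (Equiv.subtypeEquivRight (by intro a; constructor <;> (intro h; omega))))

theorem finite_main (l : ℕ) : ∀ n : ℕ,
    (∀ m, m ≤ n → Finite {t : LTree // t.size = m ∧ LTree.LabelsLe l t}) ∧
      Finite {ts : List LTree // lsize ts = n ∧ ∀ t ∈ ts, LTree.LabelsLe l t} := by
  intro n
  induction n using Nat.strong_induction_on with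
  | _ n ih =>
    have htree : ∀ m, m ≤ n → Finite {t : LTree // t.size = m ∧ LTree.LabelsLe l t} := by
      intro m hm
      match m with
      | 0 =>
        haveI : IsEmpty {t : LTree // t.size = 0 ∧ LTree.LabelsLe l t} :=
          ⟨fun x => by have := x.1.one_le_size; omega⟩
        infer_instance
      | m + 1 =>
        haveI : Finite {ts : List LTree // lsize ts = m ∧ ∀ t ∈ ts, LTree.LabelsLe l t} := by
          rcases Nat.lt_or_ge m n with h | h
          · exact (ih m h).2
          · have : m = n := by omega
            subst this
            -- m = n but we need the list statement at n; this is what we're proving!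
            -- only possible if m+1 ≤ n, i.e. m < n. m+1 ≤ n means m < n, contradiction with m ≥ n
            omega
        haveI : Finite ({a : ℕ // 1 ≤ a ∧ a ≤ l} ×
            {ts : List LTree // lsize ts = m ∧ ∀ t ∈ ts, LTree.LabelsLe l t}) := by
          haveI : Finite {a : ℕ // 1 ≤ a ∧ a ≤ l} := finite_label l
          infer_instance
        exact Finite.of_equiv _ (nodeEquiv (fun a => 1 ≤ a ∧ a ≤ l) (LTree.LabelsLe l)
          (LTree.LabelsLe l) (fun a ts => LTree.labelsLe_node l a ts) m).symm
    refine ⟨htree, ?_⟩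
    match n with
    | 0 =>
      haveI : Subsingleton {ts : List LTree // lsize ts = 0 ∧ ∀ t ∈ ts, LTree.LabelsLe l t} := by
        constructor
        rintro ⟨ts, h⟩ ⟨ts', h'⟩
        have e1 : ts = [] := by
          cases ts with
          | nil => rfl
          | cons t ts => exfalso; have := t.one_le_size; simp at h; omega
        have e2 : ts' = [] := by
          cases ts' with
          | nil => rfl
          | cons t ts'' => exfalso; have := t.one_le_size; simp at h'; omega
        subst e1; subst e2; rfl
      exact Finite.of_subsingleton
    | n + 1 =>
      haveI : Finite {x : LTree × List LTree //
          x.1.size + lsize x.2 = n + 1 ∧ LTree.LabelsLe l x.1 ∧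
            ∀ t ∈ x.2, LTree.LabelsLe l t} := by
        haveI : ∀ i : Fin (n + 2),
            Finite ({t : LTree // t.size = i.1 ∧ LTree.LabelsLe l t} ×
              {ts : List LTree // lsize ts = n + 1 - i.1 ∧ ∀ t ∈ ts, LTree.LabelsLe l t}) := by
          intro i
          rcases Nat.eq_zero_or_pos i.1 with h | h
          · haveI : IsEmpty {t : LTree // t.size = i.1 ∧ LTree.LabelsLe l t} :=
              ⟨fun x => by have := x.1.one_le_size; have := x.2.1; omega⟩
            infer_instance
          · haveI f1 : Finite {t : LTree // t.size = i.1 ∧ LTree.LabelsLe l t} := by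
              rcases Nat.lt_or_ge i.1 (n + 1) with h' | h'
              · exact htree i.1 (by omega)
              · have : i.1 = n + 1 := by have := i.2; omega
                rw [this]
                -- size n+1 tree: decompose via lists of size n
                haveI := (ih n (by omega)).2
                haveI : Finite ({a : ℕ // 1 ≤ a ∧ a ≤ l} ×
                    {ts : List LTree // lsize ts = n ∧ ∀ t ∈ ts, LTree.LabelsLe l t}) := by
                  haveI : Finite {a : ℕ // 1 ≤ a ∧ a ≤ l} := finite_label l
                  infer_instance
                exact Finite.of_equiv _ (nodeEquiv (fun a => 1 ≤ a ∧ a ≤ l) (LTree.LabelsLe l)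
                  (LTree.LabelsLe l) (fun a ts => LTree.labelsLe_node l a ts) n).symm
            haveI f2 : Finite {ts : List LTree //
                lsize ts = n + 1 - i.1 ∧ ∀ t ∈ ts, LTree.LabelsLe l t} :=
              (ih (n + 1 - i.1) (by omega)).2
            infer_instance
        exact Finite.of_equiv _
          (pairSigmaEquiv LTree.size lsize (LTree.LabelsLe l)
            (fun ts => ∀ t ∈ ts, LTree.LabelsLe l t) (n + 1)).symm
      exact Finite.of_equiv _ (consEquiv (LTree.LabelsLe l) n).symm

section Counting

variable (a1 a2 : ℕ)

def Good (t : LTree) : Prop :=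
  t.LabelsLe (a1 + a2) ∧ t.Valid (fun u v => u ≤ a1 ∨ v ≤ a1)

def SG (t : LTree) : Prop := Good a1 a2 t ∧ t.label ≤ a1

def BG (t : LTree) : Prop := Good a1 a2 t ∧ a1 < t.label

theorem valid_node' (P : ℕ → ℕ → Prop) (a : ℕ) (ts : List LTree) :
    LTree.Valid P (LTree.node a ts) ↔ ∀ t ∈ ts, P a t.label ∧ LTree.Valid P t := by
  rw [LTree.Valid]

theorem good_mono (t : LTree) (h : Good a1 a2 t) : t.LabelsLe (a1 + a2) := h.1

theorem SG_node (h1 : 1 ≤ a1) (a : ℕ) (ts : List LTree) :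
    SG a1 a2 (LTree.node a ts) ↔ (1 ≤ a ∧ a ≤ a1) ∧ ∀ t ∈ ts, Good a1 a2 t := by
  constructor
  · rintro ⟨⟨hl, hv⟩, hlab⟩
    rw [LTree.labelsLe_node] at hl
    rw [valid_node'] at hv
    refine ⟨⟨hl.1.1, hlab⟩, fun t ht => ⟨hl.2 t ht, (hv t ht).2⟩⟩
  · rintro ⟨⟨ha1, ha2⟩, hts⟩
    refine ⟨⟨?_, ?_⟩, ha2⟩
    · rw [LTree.labelsLe_node]
      exact ⟨⟨ha1, by omega⟩, fun t ht => (hts t ht).1⟩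
    · rw [valid_node']
      exact fun t ht => ⟨Or.inl ha2, (hts t ht).2⟩

theorem BG_node (a : ℕ) (ts : List LTree) :
    BG a1 a2 (LTree.node a ts) ↔ (a1 + 1 ≤ a ∧ a ≤ a1 + a2) ∧ ∀ t ∈ ts, SG a1 a2 t := by
  constructor
  · rintro ⟨⟨hl, hv⟩, hlab⟩
    rw [LTree.labelsLe_node] at hl
    rw [valid_node'] at hv
    have hlab' : a1 + 1 ≤ a := hlab
    refine ⟨⟨hlab', hl.1.2⟩, fun t ht => ⟨⟨hl.2 t ht, (hv t ht).2⟩, ?_⟩⟩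
    · rcases (hv t ht).1 with h | h
      · omega
      · exact h
  · rintro ⟨⟨ha1, ha2⟩, hts⟩
    refine ⟨⟨?_, ?_⟩, ha1⟩
    · rw [LTree.labelsLe_node]
      refine ⟨⟨by omega, ha2⟩, fun t ht => (hts t ht).1.1⟩
    · rw [valid_node']
      exact fun t ht => ⟨Or.inr (hts t ht).2, (hts t ht).1.2⟩

theorem good_node (a : ℕ) (ts : List LTree) (hG : Good a1 a2 (LTree.node a ts)) :
    ∀ t ∈ ts, Good a1 a2 t := by
  obtain ⟨hl, hv⟩ := hG
  rw [LTree.labelsLe_node] at hl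
  rw [valid_node'] at hv
  exact fun t ht => ⟨hl.2 t ht, (hv t ht).2⟩

-- counts
noncomputable def cT (n : ℕ) : ℕ := Nat.card {t : LTree // t.size = n ∧ SG a1 a2 t}
noncomputable def cB (n : ℕ) : ℕ := Nat.card {t : LTree // t.size = n ∧ BG a1 a2 t}
noncomputable def cA (n : ℕ) : ℕ := Nat.card {t : LTree // t.size = n ∧ Good a1 a2 t}
noncomputable def cL (n : ℕ) : ℕ :=
  Nat.card {ts : List LTree // lsize ts = n ∧ ∀ t ∈ ts, Good a1 a2 t}
noncomputable def cL1 (n : ℕ) : ℕ :=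
  Nat.card {ts : List LTree // lsize ts = n ∧ ∀ t ∈ ts, SG a1 a2 t}

-- finiteness transfer
theorem finite_sub_tree (n : ℕ) (W : LTree → Prop)
    (hW : ∀ t, W t → t.LabelsLe (a1 + a2)) :
    Finite {t : LTree // t.size = n ∧ W t} := by
  haveI := ((finite_main (a1 + a2) n).1 n le_rfl)
  exact Finite.of_injective
    (fun x => (⟨x.1, x.2.1, hW x.1 x.2.2⟩ :
      {t : LTree // t.size = n ∧ t.LabelsLe (a1 + a2)}))
    (fun x y h => by
      have hv := congrArg Subtype.val h
      exact Subtype.ext hv)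

theorem finite_sub_list (n : ℕ) (W : LTree → Prop)
    (hW : ∀ t, W t → t.LabelsLe (a1 + a2)) :
    Finite {ts : List LTree // lsize ts = n ∧ ∀ t ∈ ts, W t} := by
  haveI := (finite_main (a1 + a2) n).2
  exact Finite.of_injective
    (fun x => (⟨x.1, x.2.1, fun t ht => hW t (x.2.2 t ht)⟩ :
      {ts : List LTree // lsize ts = n ∧ ∀ t ∈ ts, t.LabelsLe (a1 + a2)}))
    (fun x y h => by
      have hv := congrArg Subtype.val h
      exact Subtype.ext hv)

end Counting

section CountIdent

variable (a1 a2 : ℕ)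

theorem card_interval' (m : ℕ) : Nat.card {a : ℕ // 1 ≤ a ∧ a ≤ m} = m := by
  rw [Nat.card_congr (Equiv.subtypeEquivRight (q := fun a => 0 + 1 ≤ a ∧ a ≤ 0 + m)
    (by intro a; constructor <;> (intro h; omega)))]
  exact card_interval 0 m

instance fin_cT (n : ℕ) : Finite {t : LTree // t.size = n ∧ SG a1 a2 t} :=
  finite_sub_tree a1 a2 n _ (fun t ht => ht.1.1)
instance fin_cB (n : ℕ) : Finite {t : LTree // t.size = n ∧ BG a1 a2 t} :=
  finite_sub_tree a1 a2 n _ (fun t ht => ht.1.1)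
instance fin_cA (n : ℕ) : Finite {t : LTree // t.size = n ∧ Good a1 a2 t} :=
  finite_sub_tree a1 a2 n _ (fun t ht => ht.1)
instance fin_cL (n : ℕ) :
    Finite {ts : List LTree // lsize ts = n ∧ ∀ t ∈ ts, Good a1 a2 t} :=
  finite_sub_list a1 a2 n _ (fun t ht => ht.1)
instance fin_cL1 (n : ℕ) :
    Finite {ts : List LTree // lsize ts = n ∧ ∀ t ∈ ts, SG a1 a2 t} :=
  finite_sub_list a1 a2 n _ (fun t ht => ht.1.1)

theorem cT_zero : cT a1 a2 0 = 0 := by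
  haveI : IsEmpty {t : LTree // t.size = 0 ∧ SG a1 a2 t} :=
    ⟨fun x => by have := x.1.one_le_size; have := x.2.1; omega⟩
  simp [cT]

theorem cB_zero : cB a1 a2 0 = 0 := by
  haveI : IsEmpty {t : LTree // t.size = 0 ∧ BG a1 a2 t} :=
    ⟨fun x => by have := x.1.one_le_size; have := x.2.1; omega⟩
  simp [cB]

theorem cA_zero : cA a1 a2 0 = 0 := by
  haveI : IsEmpty {t : LTree // t.size = 0 ∧ Good a1 a2 t} :=
    ⟨fun x => by have := x.1.one_le_size; have := x.2.1; omega⟩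
  simp [cA]

theorem cL_zero : cL a1 a2 0 = 1 := by
  rw [cL, Nat.card_eq_one_iff_unique]
  constructor
  · constructor
    rintro ⟨ts, h⟩ ⟨ts', h'⟩
    have e1 : ts = [] := by
      cases ts with
      | nil => rfl
      | cons t ts => exfalso; have := t.one_le_size; simp at h; omega
    have e2 : ts' = [] := by
      cases ts' with
      | nil => rfl
      | cons t ts'' => exfalso; have := t.one_le_size; simp at h'; omega
    subst e1; subst e2; rfl
  · exact ⟨⟨[], rfl, by simp⟩⟩

theorem cL1_zero : cL1 a1 a2 0 = 1 := by
  rw [cL1, Nat.card_eq_one_iff_unique]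
  constructor
  · constructor
    rintro ⟨ts, h⟩ ⟨ts', h'⟩
    have e1 : ts = [] := by
      cases ts with
      | nil => rfl
      | cons t ts => exfalso; have := t.one_le_size; simp at h; omega
    have e2 : ts' = [] := by
      cases ts' with
      | nil => rfl
      | cons t ts'' => exfalso; have := t.one_le_size; simp at h'; omega
    subst e1; subst e2; rfl
  · exact ⟨⟨[], rfl, by simp⟩⟩

theorem cT_succ (h1 : 1 ≤ a1) (n : ℕ) : cT a1 a2 (n + 1) = a1 * cL a1 a2 n := by
  rw [cT, Nat.card_congr (nodeEquiv (fun a => 1 ≤ a ∧ a ≤ a1) (Good a1 a2) (SG a1 a2)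
    (fun a ts => SG_node a1 a2 h1 a ts) n), Nat.card_prod, card_interval', cL]

theorem cB_succ (n : ℕ) : cB a1 a2 (n + 1) = a2 * cL1 a1 a2 n := by
  rw [cB, Nat.card_congr (nodeEquiv (fun a => a1 + 1 ≤ a ∧ a ≤ a1 + a2) (SG a1 a2) (BG a1 a2)
    (fun a ts => BG_node a1 a2 a ts) n), Nat.card_prod, card_interval, cL1]

def splitEquiv {α : Type*} (P Q : α → Prop) [DecidablePred Q] :
    {x : α // P x} ≃ {x : α // P x ∧ Q x} ⊕ {x : α // P x ∧ ¬Q x} where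
  toFun x := if h : Q x.1 then Sum.inl ⟨x.1, x.2, h⟩ else Sum.inr ⟨x.1, x.2, h⟩
  invFun y := y.elim (fun z => ⟨z.1, z.2.1⟩) (fun z => ⟨z.1, z.2.1⟩)
  left_inv := by
    rintro ⟨x, h⟩
    by_cases hq : Q x <;> simp [hq]
  right_inv := by
    rintro (⟨x, h, hq⟩ | ⟨x, h, hq⟩) <;> simp [hq]

theorem cA_split (n : ℕ) : cA a1 a2 n = cT a1 a2 n + cB a1 a2 n := by
  classical
  have e : {t : LTree // t.size = n ∧ Good a1 a2 t} ≃
      {t : LTree // t.size = n ∧ SG a1 a2 t} ⊕ {t : LTree // t.size = n ∧ BG a1 a2 t} :=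
    (splitEquiv (fun t : LTree => t.size = n ∧ Good a1 a2 t) (fun t => t.label ≤ a1)).trans
      (Equiv.sumCongr
        (Equiv.subtypeEquivRight (by
          intro t; constructor
          · rintro ⟨⟨hs, hg⟩, hq⟩; exact ⟨hs, hg, hq⟩
          · rintro ⟨hs, hg, hq⟩; exact ⟨⟨hs, hg⟩, hq⟩))
        (Equiv.subtypeEquivRight (by
          intro t; constructor
          · rintro ⟨⟨hs, hg⟩, hq⟩; exact ⟨hs, hg, by omega⟩
          · rintro ⟨hs, hg, hq⟩; exact ⟨⟨hs, hg⟩, by omega⟩)))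
  rw [cA, Nat.card_congr e, Nat.card_sum, cT, cB]

theorem cL_succ (n : ℕ) : cL a1 a2 (n + 1) =
    ∑ i ∈ Finset.range (n + 2), cA a1 a2 i * cL a1 a2 (n + 1 - i) := by
  rw [cL, Nat.card_congr (consEquiv (Good a1 a2) n)]
  exact nat_card_pair LTree.size lsize (Good a1 a2) (fun ts => ∀ t ∈ ts, Good a1 a2 t) (n + 1)
    (fun i => fin_cA a1 a2 i) (fun i => fin_cL a1 a2 i)

theorem cL1_succ (n : ℕ) : cL1 a1 a2 (n + 1) =
    ∑ i ∈ Finset.range (n + 2), cT a1 a2 i * cL1 a1 a2 (n + 1 - i) := by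
  rw [cL1, Nat.card_congr (consEquiv (SG a1 a2) n)]
  exact nat_card_pair LTree.size lsize (SG a1 a2) (fun ts => ∀ t ∈ ts, SG a1 a2 t) (n + 1)
    (fun i => fin_cT a1 a2 i) (fun i => fin_cL1 a1 a2 i)

end CountIdent

section Series

open PowerSeries

variable (a1 a2 : ℕ)

noncomputable def Sc : PowerSeries ℚ := PowerSeries.mk fun n => (cL a1 a2 n : ℚ)
noncomputable def S1c : PowerSeries ℚ := PowerSeries.mk fun n => (cL1 a1 a2 n : ℚ)
noncomputable def Fc : PowerSeries ℚ := PowerSeries.mk fun n => (cT a1 a2 n : ℚ)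
noncomputable def Gc : PowerSeries ℚ := PowerSeries.mk fun n => (cB a1 a2 n : ℚ)
noncomputable def Ac : PowerSeries ℚ := PowerSeries.mk fun n => (cA a1 a2 n : ℚ)

theorem Ac_eq : Ac a1 a2 = Fc a1 a2 + Gc a1 a2 := by
  ext n
  simp only [Ac, Fc, Gc, coeff_mk, map_add, cA_split]
  push_cast
  ring

theorem Fc_eq (h1 : 1 ≤ a1) : Fc a1 a2 = PowerSeries.C (a1 : ℚ) * X * Sc a1 a2 := by
  ext n
  cases n with
  | zero =>
    simp only [Fc, coeff_mk, cT_zero, mul_assoc, coeff_C_mul, coeff_zero_X_mul, Nat.cast_zero,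
      mul_zero]
  | succ n =>
    rw [mul_assoc]
    simp only [Fc, coeff_mk, coeff_C_mul, coeff_succ_X_mul, Sc, coeff_mk, cT_succ a1 a2 h1 n]
    push_cast
    ring

theorem Gc_eq : Gc a1 a2 = PowerSeries.C (a2 : ℚ) * X * S1c a1 a2 := by
  ext n
  cases n with
  | zero =>
    simp only [Gc, coeff_mk, cB_zero, mul_assoc, coeff_C_mul, coeff_zero_X_mul, Nat.cast_zero,
      mul_zero]
  | succ n =>
    rw [mul_assoc]
    simp only [Gc, coeff_mk, coeff_C_mul, coeff_succ_X_mul, S1c, coeff_mk, cB_succ a1 a2 n]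
    push_cast
    ring

theorem Sc_eq : Sc a1 a2 = 1 + Ac a1 a2 * Sc a1 a2 := by
  ext n
  rw [map_add, coeff_mul]
  cases n with
  | zero =>
    simp only [Sc, Ac, coeff_mk, coeff_one]
    simp [Finset.Nat.antidiagonal_zero, cA_zero, cL_zero]
  | succ n =>
    rw [Finset.Nat.sum_antidiagonal_eq_sum_range_succ
      (fun i j => (coeff i) (Ac a1 a2) * (coeff j) (Sc a1 a2))]
    simp only [Sc, Ac, coeff_mk, coeff_one, Nat.succ_ne_zero, if_false, zero_add]
    rw [cL_succ]
    push_cast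
    rfl

theorem S1c_eq : S1c a1 a2 = 1 + Fc a1 a2 * S1c a1 a2 := by
  ext n
  rw [map_add, coeff_mul]
  cases n with
  | zero =>
    simp only [S1c, Fc, coeff_mk, coeff_one]
    simp [Finset.Nat.antidiagonal_zero, cT_zero, cL1_zero]
  | succ n =>
    rw [Finset.Nat.sum_antidiagonal_eq_sum_range_succ
      (fun i j => (coeff i) (Fc a1 a2) * (coeff j) (S1c a1 a2))]
    simp only [S1c, Fc, coeff_mk, coeff_one, Nat.succ_ne_zero, if_false, zero_add]
    rw [cL1_succ]
    push_cast
    rfl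

/-- The key algebraic relation: `F = a1 X S1 + a2 X F S1²`. -/
theorem Fc_key (h1 : 1 ≤ a1) :
    Fc a1 a2 = PowerSeries.C (a1 : ℚ) * X * S1c a1 a2 +
      PowerSeries.C (a2 : ℚ) * X * Fc a1 a2 * S1c a1 a2 ^ 2 := by
  have hs1 := S1c_eq a1 a2
  have hs := Sc_eq a1 a2
  rw [Ac_eq] at hs
  have hf := Fc_eq a1 a2 h1
  have hg := Gc_eq a1 a2
  linear_combination (1 - Gc a1 a2 * S1c a1 a2) * hf + Fc a1 a2 * S1c a1 a2 * hg +
    (PowerSeries.C (a1 : ℚ) * X * S1c a1 a2) * hs - (PowerSeries.C (a1 : ℚ) * X * Sc a1 a2) * hs1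

end Series

noncomputable def bc (N t : ℤ) : ℚ :=
  if 0 ≤ t ∧ t ≤ N then ((N.toNat).choose t.toNat : ℚ) else 0

theorem bc_pascal (N : ℤ) (hN : 1 ≤ N) (t : ℤ) :
    bc N t = bc (N - 1) t + bc (N - 1) (t - 1) := by
  unfold bc
  split_ifs with h1 h2 h3 h2 h3 h3
  · -- all true: 1 ≤ t ≤ N - 1
    have hN' : N.toNat = (N - 1).toNat + 1 := by omega
    have ht' : t.toNat = (t - 1).toNat + 1 := by omega
    rw [hN', ht', Nat.choose_succ_succ]
    push_cast
    ring
  · -- t = 0 case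
    have ht0 : t = 0 := by omega
    subst ht0
    simp
  · -- t = N
    have e1 : t.toNat = N.toNat := by omega
    have e2 : (t - 1).toNat = (N - 1).toNat := by omega
    have e3 : N.toNat = (N - 1).toNat + 1 := by omega
    rw [e1, e2, e3]
    simp [Nat.choose_self, Nat.choose_succ_self_right]
  · omega
  · omega
  · omega
  · omega
  · norm_num

theorem bc_absorb (N t : ℤ) : t * bc N t = (N - t + 1) * bc N (t - 1) := by
  unfold bc
  split_ifs with h1 h2 h2
  · -- 1 ≤ t ≤ N
    have key := Nat.choose_succ_right_eq N.toNat (t - 1).toNat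
    have e0 : (t - 1).toNat + 1 = t.toNat := by omega
    rw [e0] at key
    have := congrArg (Nat.cast : ℕ → ℚ) key
    push_cast [Nat.cast_sub (show (t - 1).toNat ≤ N.toNat by omega)] at this
    have e1 : ((t - 1).toNat : ℚ) = (t : ℚ) - 1 := by
      have : ((t - 1).toNat : ℤ) = t - 1 := Int.toNat_of_nonneg (by omega)
      exact_mod_cast congrArg (Int.cast : ℤ → ℚ) this
    have e2 : ((N).toNat : ℚ) = (N : ℚ) := by
      have : ((N).toNat : ℤ) = N := Int.toNat_of_nonneg (by omega)
      exact_mod_cast congrArg (Int.cast : ℤ → ℚ) this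
    have e3 : ((t).toNat : ℚ) = (t : ℚ) := by
      have : ((t).toNat : ℤ) = t := Int.toNat_of_nonneg (by omega)
      exact_mod_cast congrArg (Int.cast : ℤ → ℚ) this
    rw [e1, e2, e3] at this
    linear_combination this
  · -- cond1 true, cond2 false: t = 0
    have ht0 : t = 0 := by omega
    subst ht0
    norm_num
  · -- t = N + 1
    have ht : (t : ℚ) = (N : ℚ) + 1 := by
      have : t = N + 1 := by omega
      exact_mod_cast congrArg (Int.cast : ℤ → ℚ) this
    rw [ht]
    ring
  · ring

theorem bc_self (N : ℤ) (hN : 0 ≤ N) : bc N N = 1 := by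
  unfold bc
  rw [if_pos ⟨hN, le_refl N⟩, Nat.choose_self]
  norm_num

theorem bc_zero (N : ℤ) (hN : 0 ≤ N) : bc N 0 = 1 := by
  unfold bc
  rw [if_pos ⟨le_refl 0, hN⟩]
  simp

theorem bc_of_neg (N t : ℤ) (h : t < 0) : bc N t = 0 := by
  unfold bc
  rw [if_neg (by omega)]

theorem bc_of_gt (N t : ℤ) (h : N < t) : bc N t = 0 := by
  unfold bc
  rw [if_neg (by omega)]

theorem bc_eq_choose (N t : ℕ) : bc N t = (N.choose t : ℚ) := by
  unfold bc
  by_cases h : (t : ℤ) ≤ N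
  · rw [if_pos ⟨by positivity, h⟩]
    congr 1 <;> omega
  · rw [if_neg (by omega), Nat.choose_eq_zero_of_lt (by omega)]
    norm_num

noncomputable def Ng (p q m : ℕ) (j : ℤ) : ℚ :=
  bc (m : ℤ) j * ((p : ℚ) * bc (2*(m:ℤ) + q - p - 1) ((m:ℤ) - j - p) +
    (q : ℚ) * bc (2*(m:ℤ) + q - p - 1) ((m:ℤ) - j - p - 1))

theorem Ng_expand (p q m : ℕ) (j : ℤ) (Mz T E : ℤ)
    (hM : Mz = (m : ℤ)) (hT : T = 2*(m:ℤ) + q - p - 1) (hE : E = (m:ℤ) - j - p) :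
    Ng p q m j = bc Mz j * ((p : ℚ) * bc T E + (q : ℚ) * bc T (E - 1)) := by
  subst hM; subst hT; subst hE; rfl

noncomputable def gq (p q m : ℕ) (j : ℤ) : ℚ :=
  if m = 0 then (if p = 0 ∧ j = 0 then 1 else 0) else Ng p q m j / m

theorem gq_zero_of_neg (p q m : ℕ) (j : ℤ) (hj : j < 0) : gq p q m j = 0 := by
  unfold gq
  split_ifs with h h2
  · omega
  · rfl
  · unfold Ng
    rw [bc_of_neg _ _ hj]
    simp

theorem gq_zero_of_gt (p q m : ℕ) (j : ℤ) (hj : (m : ℤ) < j) : gq p q m j = 0 := by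
  unfold gq
  split_ifs with h h2
  · omega
  · rfl
  · unfold Ng
    rw [bc_of_gt _ _ hj]
    simp

theorem gq_G1 (p q m : ℕ) (hm : 1 ≤ m) (j : ℤ) :
    gq (p+1) q m j = gq p (q+1) (m-1) j + gq (p+1) (q+2) (m-1) (j-1) := by
  match m, hm with
  | 1, _ =>
    have e1 : gq p (q+1) (1-1) j = if p = 0 ∧ j = 0 then 1 else 0 := by simp [gq]
    have e2 : gq (p+1) (q+2) (1-1) (j-1) = 0 := by
      simp [gq]
    have e3 : gq (p+1) q 1 j = Ng (p+1) q 1 j := by simp [gq]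
    rw [e1, e2, e3, add_zero]
    by_cases hj : j = 0
    · subst hj
      by_cases hp : p = 0
      · subst hp
        rw [if_pos ⟨rfl, rfl⟩]
        rw [Ng_expand (0+1) q 1 0 1 (q : ℤ) 0 (by norm_num) (by push_cast; ring) (by norm_num)]
        rw [bc_zero 1 (by norm_num), bc_zero (q:ℤ) (by positivity), bc_of_neg _ _ (by norm_num)]
        norm_num
      · rw [if_neg (by tauto)]
        rw [Ng_expand (p+1) q 1 0 1 ((q:ℤ) - p) ((0:ℤ) - p) (by norm_num) (by push_cast; ring)
          (by push_cast; ring)]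
        rw [bc_of_neg _ ((0:ℤ) - p) (by omega), bc_of_neg _ ((0:ℤ) - p - 1) (by omega)]
        norm_num
    · rw [if_neg (by tauto)]
      rcases lt_or_gt_of_ne hj with h | h
      · rw [Ng_expand (p+1) q 1 j 1 ((q:ℤ) - p) ((0:ℤ) - j - p) (by norm_num) (by push_cast; ring)
          (by push_cast; ring)]
        rw [bc_of_neg 1 j h]
        norm_num
      · rw [Ng_expand (p+1) q 1 j 1 ((q:ℤ) - p) ((0:ℤ) - j - p) (by norm_num) (by push_cast; ring)
          (by push_cast; ring)]
        rw [bc_of_neg _ ((0:ℤ) - j - p) (by omega), bc_of_neg _ ((0:ℤ) - j - p - 1) (by omega)]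
        norm_num
  | (m+2), _ =>
    have key : ((m:ℚ)+1) * Ng (p+1) q (m+2) j =
        ((m:ℚ)+2) * Ng p (q+1) (m+1) j + ((m:ℚ)+2) * Ng (p+1) (q+2) (m+1) (j-1) := by
      rw [Ng_expand (p+1) q (m+2) j ((m:ℤ)+2) (2*(m:ℤ)+q-p+2) ((m:ℤ)-j-p+1)
          (by push_cast; ring) (by push_cast; ring) (by push_cast; ring),
        Ng_expand p (q+1) (m+1) j (((m:ℤ)+2)-1) (2*(m:ℤ)+q-p+2) ((m:ℤ)-j-p+1)
          (by push_cast; ring) (by push_cast; ring) (by push_cast; ring),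
        Ng_expand (p+1) (q+2) (m+1) (j-1) (((m:ℤ)+2)-1) (2*(m:ℤ)+q-p+2) ((m:ℤ)-j-p+1)
          (by push_cast; ring) (by push_cast; ring) (by push_cast; ring)]
      have hP := bc_pascal ((m:ℤ)+2) (by omega) j
      have hR1 := bc_absorb (2*(m:ℤ)+q-p+2) ((m:ℤ)-j-p+1)
      have hR2 := bc_absorb (((m:ℤ)+2)-1) j
      push_cast
      push_cast at hR1 hR2
      linear_combination
        (((m:ℚ)+1)*(((p:ℚ)+1)*(bc (2*(m:ℤ)+q-p+2) ((m:ℤ)-j-p+1)) +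
          (q:ℚ)*(bc (2*(m:ℤ)+q-p+2) ((m:ℤ)-j-p+1-1)))) * hP +
        ((bc (((m:ℤ)+2)-1) j + bc (((m:ℤ)+2)-1) (j-1))) * hR1 +
        ((bc (2*(m:ℤ)+q-p+2) ((m:ℤ)-j-p+1) + bc (2*(m:ℤ)+q-p+2) ((m:ℤ)-j-p+1-1))) * hR2
    have h2 : (m + 2 : ℕ) - 1 = m + 1 := by omega
    rw [h2]
    simp only [gq, if_neg (Nat.succ_ne_zero _)]
    rw [div_add_div _ _ (by positivity : ((m+1 : ℕ):ℚ) ≠ 0) (by positivity : ((m+1 : ℕ):ℚ) ≠ 0)]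
    rw [div_eq_div_iff (by positivity) (by positivity)]
    push_cast
    linear_combination ((m:ℚ)+1) * key

theorem gq_G2 (q m : ℕ) (j : ℤ) :
    gq 0 (q+1) m j = gq 0 q m j + gq 1 (q+1) m j := by
  rcases Nat.eq_zero_or_pos m with hm | hm
  · subst hm
    simp only [gq, if_pos rfl]
    have : ¬((1:ℕ) = 0 ∧ j = 0) := by omega
    rw [if_neg this]
    by_cases hj : j = 0 <;> simp [hj]
  · simp only [gq, if_neg (by omega : ¬ m = 0)]
    have key : Ng 0 (q+1) m j = Ng 0 q m j + Ng 1 (q+1) m j := by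
      rw [Ng_expand 0 (q+1) m j (m:ℤ) (2*(m:ℤ)+q) ((m:ℤ)-j)
          (by push_cast; ring) (by push_cast; ring) (by push_cast; ring),
        Ng_expand 0 q m j (m:ℤ) ((2*(m:ℤ)+q)-1) ((m:ℤ)-j)
          (by push_cast; ring) (by push_cast; ring) (by push_cast; ring),
        Ng_expand 1 (q+1) m j (m:ℤ) ((2*(m:ℤ)+q)-1) ((m:ℤ)-j-1)
          (by push_cast; ring) (by push_cast; ring) (by push_cast; ring)]
      have hP := bc_pascal (2*(m:ℤ)+q) (by omega) ((m:ℤ)-j-1)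
      push_cast
      have e1 : (m:ℤ) - j - 1 = (m:ℤ) - j - 1 - 1 + 1 := by ring
      linear_combination (bc (m:ℤ) j * ((q:ℚ)+1)) * hP
    rw [key]
    ring

noncomputable def gam (a1 a2 p q m : ℕ) : ℚ :=
  ∑ j ∈ Finset.range (m+1), gq p q m (j : ℤ) * (a1:ℚ)^(m-j) * (a2:ℚ)^j

theorem gam_zero (a1 a2 p q : ℕ) : gam a1 a2 p q 0 = if p = 0 then 1 else 0 := by
  simp only [gam, Finset.sum_range_one]
  by_cases hp : p = 0 <;> simp [gq, hp]

theorem gam00 (a1 a2 m : ℕ) (hm : 1 ≤ m) : gam a1 a2 0 0 m = 0 := by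
  unfold gam
  apply Finset.sum_eq_zero
  intro j hj
  unfold gq
  rw [if_neg (by omega)]
  unfold Ng
  push_cast
  ring

theorem gam_W1 (a1 a2 p q m : ℕ) :
    gam a1 a2 (p+1) q (m+1) = a1 * gam a1 a2 p (q+1) m + a2 * gam a1 a2 (p+1) (q+2) m := by
  unfold gam
  rw [Finset.sum_congr rfl (fun j hj => by
    rw [gq_G1 p q (m+1) (by omega) (j : ℤ)])]
  simp only [Nat.add_sub_cancel]
  have split : ∑ j ∈ Finset.range (m+1+1),
      (gq p (q+1) m (j:ℤ) + gq (p+1) (q+2) m ((j:ℤ)-1)) * (a1:ℚ)^(m+1-j) * (a2:ℚ)^j =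
      (∑ j ∈ Finset.range (m+2), gq p (q+1) m (j:ℤ) * (a1:ℚ)^(m+1-j) * (a2:ℚ)^j) +
      (∑ j ∈ Finset.range (m+2), gq (p+1) (q+2) m ((j:ℤ)-1) * (a1:ℚ)^(m+1-j) * (a2:ℚ)^j) := by
    rw [← Finset.sum_add_distrib]
    apply Finset.sum_congr rfl
    intro j hj
    ring
  rw [split]
  congr 1
  · -- a1 part
    rw [Finset.sum_range_succ]
    rw [gq_zero_of_gt p (q+1) m ((m+1 : ℕ) : ℤ) (by exact_mod_cast Nat.lt_succ_self m)]
    rw [zero_mul, zero_mul, add_zero, Finset.mul_sum]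
    apply Finset.sum_congr rfl
    intro j hj
    have hj' : j ≤ m := by simpa [Nat.lt_succ_iff] using hj
    have : m + 1 - j = (m - j) + 1 := by omega
    rw [this, pow_succ]
    ring
  · -- a2 part
    rw [Finset.sum_range_succ']
    have h0 : gq (p+1) (q+2) m (((0:ℕ):ℤ)-1) = 0 := gq_zero_of_neg _ _ _ _ (by norm_num)
    rw [h0, zero_mul, zero_mul, add_zero, Finset.mul_sum]
    apply Finset.sum_congr rfl
    intro j hj
    have e1 : ((j + 1 : ℕ) : ℤ) - 1 = (j : ℤ) := by push_cast; ring
    rw [e1]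
    have e2 : m + 1 - (j + 1) = m - j := by omega
    rw [e2, pow_succ]
    ring

theorem gam_W2 (a1 a2 q m : ℕ) :
    gam a1 a2 0 (q+1) m = gam a1 a2 0 q m + gam a1 a2 1 (q+1) m := by
  unfold gam
  rw [← Finset.sum_add_distrib]
  apply Finset.sum_congr rfl
  intro j hj
  rw [gq_G2 q m (j : ℤ)]
  ring

section MainProof

open PowerSeries

theorem LTree.size_child_lt (a : ℕ) (ts : List LTree) (t : LTree) (ht : t ∈ ts) :
    t.size < (LTree.node a ts).size := by
  rw [LTree.size_node]
  have : t.size ≤ (ts.map LTree.size).sum :=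
    List.single_le_sum (fun x _ => Nat.zero_le x) _ (List.mem_map_of_mem (f := LTree.size) ht)
  omega

theorem LTree.label_bounds (l : ℕ) (t : LTree) (h : t.LabelsLe l) :
    1 ≤ t.label ∧ t.label ≤ l := by
  cases t with
  | node a ts =>
    rw [LTree.labelsLe_node] at h
    exact h.1

theorem cellMem_iff (a1 a2 : ℕ) (L : ℕ → ℕ)
    (hL : ∀ i, L i = if 1 ≤ i ∧ i ≤ a1 then a1 + a2 else if i ≤ a1 + a2 then a1 else 0)
    (u v : ℕ) (hu1 : 1 ≤ u) (hu2 : u ≤ a1 + a2) (hv1 : 1 ≤ v) (hv2 : v ≤ a1 + a2) :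
    cellMem L u v ↔ (u ≤ a1 ∨ v ≤ a1) := by
  unfold cellMem
  rw [hL u]
  split_ifs with h h' <;> omega

theorem valid_iff (a1 a2 : ℕ) (L : ℕ → ℕ)
    (hL : ∀ i, L i = if 1 ≤ i ∧ i ≤ a1 then a1 + a2 else if i ≤ a1 + a2 then a1 else 0) :
    ∀ n (t : LTree), t.size ≤ n → t.LabelsLe (a1 + a2) →
      (t.Valid (cellMem L) ↔ t.Valid (fun u v => u ≤ a1 ∨ v ≤ a1)) := by
  intro n
  induction n with
  | zero => intro t hst _; exact absurd hst (by have := t.one_le_size; omega)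
  | succ n ih =>
    rintro ⟨a, ts⟩ hst hll
    rw [LTree.labelsLe_node] at hll
    rw [valid_node', valid_node']
    apply forall_congr'
    intro t
    apply imp_congr_right
    intro ht
    have hlb := LTree.label_bounds (a1 + a2) t (hll.2 t ht)
    have hsz : t.size ≤ n := by
      have := LTree.size_child_lt a ts t ht
      omega
    rw [cellMem_iff a1 a2 L hL a t.label hll.1.1 hll.1.2 hlb.1 hlb.2,
      ih t hsz (hll.2 t ht)]

theorem lambda_iff_good (a1 a2 : ℕ) (L : ℕ → ℕ)
    (hL : ∀ i, L i = if 1 ≤ i ∧ i ≤ a1 then a1 + a2 else if i ≤ a1 + a2 then a1 else 0)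
    (t : LTree) : IsLambdaPlaneTree L (a1 + a2) t ↔ Good a1 a2 t := by
  unfold IsLambdaPlaneTree Good
  constructor
  · rintro ⟨hl, hv⟩
    exact ⟨hl, (valid_iff a1 a2 L hL t.size t le_rfl hl).1 hv⟩
  · rintro ⟨hl, hv⟩
    exact ⟨hl, (valid_iff a1 a2 L hL t.size t le_rfl hl).2 hv⟩

theorem coeff_main (a1 a2 : ℕ) (h1 : 1 ≤ a1) :
    ∀ m p q : ℕ,
      PowerSeries.coeff m (Fc a1 a2 ^ p * S1c a1 a2 ^ q) = gam a1 a2 p q m := by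
  intro m
  induction m using Nat.strong_induction_on with
  | _ m ih =>
    have hpos : ∀ p q : ℕ,
        PowerSeries.coeff m (Fc a1 a2 ^ (p+1) * S1c a1 a2 ^ q) = gam a1 a2 (p+1) q m := by
      intro p q
      have expand : Fc a1 a2 ^ (p+1) * S1c a1 a2 ^ q =
          PowerSeries.C (a1 : ℚ) * X * (Fc a1 a2 ^ p * S1c a1 a2 ^ (q+1)) +
            PowerSeries.C (a2 : ℚ) * X * (Fc a1 a2 ^ (p+1) * S1c a1 a2 ^ (q+2)) := by
        have hk := Fc_key a1 a2 h1
        linear_combination (Fc a1 a2 ^ p * S1c a1 a2 ^ q) * hk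
      rw [expand, map_add, mul_assoc, mul_assoc, coeff_C_mul, coeff_C_mul]
      cases m with
      | zero =>
        rw [gam_zero, if_neg (Nat.succ_ne_zero p)]
        simp
      | succ n =>
        rw [coeff_succ_X_mul, coeff_succ_X_mul, ih n (Nat.lt_succ_self n) p (q+1),
          ih n (Nat.lt_succ_self n) (p+1) (q+2), gam_W1]
    intro p q
    cases p with
    | succ p => exact hpos p q
    | zero =>
      induction q with
      | zero =>
        rw [pow_zero, pow_zero, mul_one, coeff_one]
        rcases Nat.eq_zero_or_pos m with hm | hm
        · subst hm
          simp [gam_zero]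
        · rw [gam00 a1 a2 m hm, if_neg (by omega)]
      | succ q ihq =>
        have expand : Fc a1 a2 ^ 0 * S1c a1 a2 ^ (q+1) =
            Fc a1 a2 ^ 0 * S1c a1 a2 ^ q + Fc a1 a2 ^ 1 * S1c a1 a2 ^ (q+1) := by
          have hs1 := S1c_eq a1 a2
          linear_combination (S1c a1 a2 ^ q) * hs1
        rw [expand, map_add, ihq, hpos 0 (q+1), gam_W2]

theorem bc_final (k : ℕ) (hk : 1 ≤ k) (j : ℤ) :
    bc ((k:ℤ)+1) j * bc (2*(k:ℤ)) (((k:ℤ)-j+1)-1) / ((k:ℚ)+1) +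
      bc (((k:ℤ)+1)-1) (j-1) * bc (2*(k:ℤ)) (((k:ℤ)-j+1)-1) / (k:ℚ) =
      bc (2*(k:ℤ)) ((k:ℤ)-j+1) * bc (((k:ℤ)+1)-1) j / (k:ℚ) := by
  have hk0 : (k:ℚ) ≠ 0 := by positivity
  have hk1 : (k:ℚ) + 1 ≠ 0 := by positivity
  have hP := bc_pascal ((k:ℤ)+1) (by omega) j
  have hRA := bc_absorb (2*(k:ℤ)) ((k:ℤ)-j+1)
  have hRB := bc_absorb (((k:ℤ)+1)-1) j
  rw [div_add_div _ _ hk1 hk0, div_eq_div_iff (mul_ne_zero hk1 hk0) hk0]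
  push_cast at hRA hRB ⊢
  linear_combination
    ((k:ℚ)*k*(bc (2*(k:ℤ)) (((k:ℤ)-j+1)-1))) * hP +
    ((k:ℚ)*(-(bc (((k:ℤ)+1)-1) j) - bc (((k:ℤ)+1)-1) (j-1))) * hRA +
    ((k:ℚ)*(-(bc (2*(k:ℤ)) ((k:ℤ)-j+1)) - bc (2*(k:ℤ)) (((k:ℤ)-j+1)-1))) * hRB

theorem final_id (k : ℕ) (hk : 1 ≤ k) (j : ℕ) (hj : j ≤ k + 1) :
    gq 1 0 (k+1) (j:ℤ) + gq 0 1 k ((j:ℤ)-1) =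
      1/(k:ℚ) * (Nat.choose (2*k) (k+1-j) : ℚ) * (Nat.choose k j : ℚ) := by
  have e1 : gq 1 0 (k+1) (j:ℤ) = Ng 1 0 (k+1) (j:ℤ) / ((k:ℚ)+1) := by
    unfold gq
    rw [if_neg (Nat.succ_ne_zero k)]
    push_cast
    ring
  have e2 : gq 0 1 k ((j:ℤ)-1) = Ng 0 1 k ((j:ℤ)-1) / (k:ℚ) := by
    unfold gq
    rw [if_neg (by omega)]
  rw [e1, e2,
    Ng_expand 1 0 (k+1) (j:ℤ) ((k:ℤ)+1) (2*(k:ℤ)) (((k:ℤ)-(j:ℤ)+1)-1)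
      (by push_cast; ring) (by push_cast; ring) (by push_cast; ring),
    Ng_expand 0 1 k ((j:ℤ)-1) (((k:ℤ)+1)-1) (2*(k:ℤ)) ((k:ℤ)-(j:ℤ)+1)
      (by push_cast; ring) (by push_cast; ring) (by push_cast; ring)]
  have c1 : (Nat.choose (2*k) (k+1-j) : ℚ) = bc (2*(k:ℤ)) ((k:ℤ)-(j:ℤ)+1) := by
    rw [← bc_eq_choose]
    congr 1 <;> omega
  have c2 : (Nat.choose k j : ℚ) = bc (((k:ℤ)+1)-1) (j:ℤ) := by
    rw [← bc_eq_choose]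
    congr 1
    omega
  rw [c1, c2]
  have key := bc_final k hk (j:ℤ)
  push_cast at key ⊢
  linear_combination key

end MainProof

/-- For the fat hook `λ = ((a₁+a₂)^{a₁}, a₁^{a₂})`, for `k ≥ 1`,
`C_k^λ = Σ_{j=0}^{k+1} (1/k) · binom(2k, k+1-j) · binom(k, j) · a₁^{k+1-j} a₂^j`. -/
theorem stmt9 (a1 a2 : ℕ) (h1 : 1 ≤ a1) (h2 : 1 ≤ a2) (k : ℕ) (hk : 1 ≤ k)
    (L : ℕ → ℕ)
    (hL : ∀ i, L i = if 1 ≤ i ∧ i ≤ a1 then a1 + a2 else if i ≤ a1 + a2 then a1 else 0) :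
    (lambdaPlaneCount L (a1 + a2) k : ℚ) =
      ∑ j ∈ Finset.range (k + 2),
        (1 / (k : ℚ)) * (Nat.choose (2 * k) (k + 1 - j) : ℚ) * (Nat.choose k j : ℚ) *
          (a1 : ℚ) ^ (k + 1 - j) * (a2 : ℚ) ^ j := by
  classical
  have hcount : lambdaPlaneCount L (a1 + a2) k = cA a1 a2 (k+1) := by
    unfold lambdaPlaneCount cA
    exact Nat.card_congr (Equiv.subtypeEquivRight (fun t =>
      and_congr_right (fun _ => lambda_iff_good a1 a2 L hL t)))
  rw [hcount]
  have h2 : (cA a1 a2 (k+1) : ℚ) = gam a1 a2 1 0 (k+1) + a2 * gam a1 a2 0 1 k := by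
    have hAc : (cA a1 a2 (k+1) : ℚ) = PowerSeries.coeff (k+1) (Ac a1 a2) := by
      simp [Ac]
    rw [hAc, Ac_eq, map_add]
    congr 1
    · have e : Fc a1 a2 = Fc a1 a2 ^ 1 * S1c a1 a2 ^ 0 := by ring
      rw [e, coeff_main a1 a2 h1]
    · rw [Gc_eq, mul_assoc, PowerSeries.coeff_C_mul, PowerSeries.coeff_succ_X_mul]
      have e : S1c a1 a2 = Fc a1 a2 ^ 0 * S1c a1 a2 ^ 1 := by ring
      rw [e, coeff_main a1 a2 h1]
  rw [h2]
  unfold gam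
  have shift : ∑ j ∈ Finset.range (k+2), gq 0 1 k ((j:ℤ)-1) * (a1:ℚ)^(k+1-j) * (a2:ℚ)^j
      = (a2:ℚ) * ∑ j ∈ Finset.range (k+1), gq 0 1 k (j:ℤ) * (a1:ℚ)^(k-j) * (a2:ℚ)^j := by
    rw [Finset.sum_range_succ']
    have h0 : gq 0 1 k (((0:ℕ):ℤ)-1) = 0 := gq_zero_of_neg _ _ _ _ (by norm_num)
    rw [h0, zero_mul, zero_mul, add_zero, Finset.mul_sum]
    apply Finset.sum_congr rfl
    intro j hj
    have e1 : ((j + 1 : ℕ) : ℤ) - 1 = (j : ℤ) := by push_cast; ring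
    have e2 : k + 1 - (j + 1) = k - j := by omega
    rw [e1, e2, pow_succ]
    ring
  rw [← shift, ← Finset.sum_add_distrib]
  apply Finset.sum_congr rfl
  intro j hj
  have hj' : j ≤ k + 1 := by
    have := Finset.mem_range.1 hj
    omega
  have hfi := final_id k hk j hj'
  linear_combination ((a1:ℚ)^(k+1-j) * (a2:ℚ)^j) * hfi
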